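/- arXiv:2507.09203 — 2 statements merged into one kernel-verified Lean document; each statement's English description precedes it below -/
import Mathlib

section
/- Let n ≥ 2, κ₀ = (16(n-1)+27)/(80(n-1)+144), and let x, s be real numbers. Then (-3/16 + κ₀)·x² + (-1/2 + 2κ₀)·s·x + (9/(16(n-1)) + κ₀)·s² ≥ 0. -/
theorem quadratic_nonneg (n : ℕ) (hn : 2 ≤ n)
    (κ₀ : ℝ) (hκ : κ₀ = (16 * ((n : ℝ) - 1) + 27) / (80 * ((n : ℝ) - 1) + 144))
    (x s : ℝ) :
    (-3/16 + κ₀) * x ^ 2 + (-1/2 + 2 * κ₀) * s * x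
      + (9 / (16 * ((n : ℝ) - 1)) + κ₀) * s ^ 2 ≥ 0 := by
  have hm : (1:ℝ) ≤ (n : ℝ) - 1 := by
    have : (2:ℝ) ≤ (n:ℝ) := by exact_mod_cast hn
    linarith
  set m : ℝ := (n : ℝ) - 1 with hmdef
  have hm0 : 0 < m := by linarith
  have hd : 0 < 80 * m + 144 := by linarith
  have key : (-3/16 + κ₀) * x ^ 2 + (-1/2 + 2 * κ₀) * s * x
      + (9 / (16 * m) + κ₀) * s ^ 2
      = (m * x - (4 * m + 9) * s) ^ 2 / (m * (80 * m + 144)) := by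
    rw [hκ]
    field_simp
    ring
  rw [key]
  positivity
end

section
/- Let n ≥ 2, κ₀ = (16(n-1)+27)/(80(n-1)+144), and let a_{nn} and the real numbers a_{11},…,a_{n-1,n-1} be given, with s = Σ_{i≠n} a_{ii} and t = s + a_{nn}. Then -3/16·a_{nn}² - 1/2·s·a_{nn} + 9/(16(n-1))·s² ≥ -κ₀·t². -/
theorem diag_trace_ineq (n : ℕ) (hn : 2 ≤ n)
    (κ₀ : ℝ) (hκ : κ₀ = (16 * ((n : ℝ) - 1) + 27) / (80 * ((n : ℝ) - 1) + 144))
    (a : Fin n → ℝ)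
    (s : ℝ) (hs : s = ∑ i ∈ Finset.univ.erase (⟨n - 1, by omega⟩ : Fin n), a i)
    (t : ℝ) (ht : t = s + a ⟨n - 1, by omega⟩) :
    -3/16 * (a ⟨n - 1, by omega⟩) ^ 2 - 1/2 * s * a ⟨n - 1, by omega⟩
      + 9 / (16 * ((n : ℝ) - 1)) * s ^ 2 ≥ -κ₀ * t ^ 2 := by
  set x := a ⟨n - 1, by omega⟩ with hx
  have hm : (1:ℝ) ≤ (n : ℝ) - 1 := by
    have : (2:ℝ) ≤ (n : ℝ) := by exact_mod_cast hn
    linarith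
  set m := (n : ℝ) - 1 with hmdef
  have hm0 : (0:ℝ) < m := lt_of_lt_of_le one_pos hm
  have hd : (0:ℝ) < 80 * m + 144 := by linarith
  have key : -3/16 * x ^ 2 - 1/2 * s * x + 9 / (16 * m) * s ^ 2
      + (16 * m + 27) / (80 * m + 144) * (s + x) ^ 2
      = (4 * m * x - (16 * m + 36) * s) ^ 2 / (16 * m * (80 * m + 144)) := by
    field_simp
    ring
  have hnn : (0:ℝ) ≤ (4 * m * x - (16 * m + 36) * s) ^ 2 / (16 * m * (80 * m + 144)) :=
    div_nonneg (sq_nonneg _) (by positivity)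
  rw [hκ, ht]
  linarith [key, hnn]
end
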